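/- arXiv:2201.08206 — 6 statements merged into one kernel-verified Lean document; each statement's English description precedes it below -/
import Mathlib

section
/- For any measurable selection S with μ(S) < ∞, the choice of S satisfies cho(S) = ∫_S (μ(S) − 2·po(x)) dμ(x). -/
open MeasureTheory
open scoped ENNReal

/-- Integral formula for the choice of a measurable selection `S` of finite measure:
`cho(S) = ∫_S (μ(S) − 2·po(x)) dμ(x)`. -/
theorem choice_integral_formula
    {X : Type*} [MeasurableSpace X] (μ : Measure X) [SigmaFinite μ]
    (R : X → X → Prop) (hR : MeasurableSet {p : X × X | R p.1 p.2})
    (S : Set X) (hS : MeasurableSet S) (hfin : μ S < ⊤)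
    (hsel : ∀ x ∈ S, ∀ y, (R y x ∧ ¬ R x y) → y ∈ S) :
    ((μ.prod μ) {p : X × X | p.1 ∈ S ∧ p.2 ∈ S ∧ (R p.1 p.2 ↔ R p.2 p.1)}).toReal
      = ∫ x in S, ((μ S).toReal - 2 * (μ {y | R y x ∧ ¬ R x y}).toReal) ∂μ := by
  classical
  set ν := μ.prod μ with hν
  have hM1 : MeasurableSet {p : X × X | R p.1 p.2} := hR
  have hM2 : MeasurableSet {p : X × X | R p.2 p.1} := by
    have : {p : X × X | R p.2 p.1} = Prod.swap ⁻¹' {p : X × X | R p.1 p.2} := rfl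
    rw [this]
    exact hR.preimage measurable_swap
  set SS : Set (X × X) := S ×ˢ S with hSS
  set E : Set (X × X) := {p : X × X | p.1 ∈ S ∧ p.2 ∈ S ∧ (R p.1 p.2 ↔ R p.2 p.1)} with hE
  set A : Set (X × X) := SS ∩ ({p : X × X | R p.1 p.2} ∩ {p : X × X | R p.2 p.1}ᶜ) with hA
  set B : Set (X × X) := SS ∩ ({p : X × X | R p.2 p.1} ∩ {p : X × X | R p.1 p.2}ᶜ) with hB
  have hSSm : MeasurableSet SS := hS.prod hS
  have hEm : MeasurableSet E := by
    have hEeq : E = SS ∩ (({p : X × X | R p.1 p.2} ∩ {p : X × X | R p.2 p.1}) ∪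
        ({p : X × X | R p.1 p.2}ᶜ ∩ {p : X × X | R p.2 p.1}ᶜ)) := by
      ext p
      simp only [hE, hSS, Set.mem_setOf_eq, Set.mem_inter_iff, Set.mem_union, Set.mem_compl_iff,
        Set.mem_prod]
      tauto
    rw [hEeq]
    exact hSSm.inter ((hM1.inter hM2).union (hM1.compl.inter hM2.compl))
  have hAm : MeasurableSet A := hSSm.inter (hM1.inter hM2.compl)
  have hBm : MeasurableSet B := hSSm.inter (hM2.inter hM1.compl)
  -- the partition
  have hpart : ν E + ν A + ν B = ν SS := by
    have hUnion : E ∪ A ∪ B = SS := by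
      ext p
      simp only [hE, hA, hB, hSS, Set.mem_union, Set.mem_inter_iff, Set.mem_compl_iff,
        Set.mem_setOf_eq, Set.mem_prod]
      tauto
    have hdis1 : Disjoint (E ∪ A) B := by
      rw [Set.disjoint_left]
      rintro p hp hpB
      simp only [hE, hA, hB, hSS, Set.mem_union, Set.mem_inter_iff, Set.mem_compl_iff,
        Set.mem_setOf_eq, Set.mem_prod] at hp hpB
      tauto
    have hdis2 : Disjoint E A := by
      rw [Set.disjoint_left]
      rintro p hp hpA
      simp only [hE, hA, hSS, Set.mem_inter_iff, Set.mem_compl_iff,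
        Set.mem_setOf_eq, Set.mem_prod] at hp hpA
      tauto
    calc ν E + ν A + ν B = ν (E ∪ A) + ν B := by rw [measure_union hdis2 hAm]
      _ = ν (E ∪ A ∪ B) := by rw [measure_union hdis1 hBm]
      _ = ν SS := by rw [hUnion]
  have hSSval : ν SS = μ S * μ S := Measure.prod_prod S S
  have hSSfin : ν SS < ⊤ := by
    rw [hSSval]; exact ENNReal.mul_lt_top hfin hfin
  -- A and B have equal measure (swap)
  have hswap : ν A = ν B := by
    have h1 : Prod.swap ⁻¹' B = A := by
      ext ⟨x, y⟩
      simp only [hA, hB, hSS, Set.mem_preimage, Prod.swap_prod_mk, Set.mem_inter_iff,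
        Set.mem_compl_iff, Set.mem_setOf_eq, Set.mem_prod]
      tauto
    have h2 := (Measure.measurePreserving_swap (μ := μ) (ν := μ)).measure_preimage
      hBm.nullMeasurableSet
    rw [h1] at h2
    exact h2
  -- the power function
  set f : X → ℝ≥0∞ := fun x => μ {y | R y x ∧ ¬ R x y} with hf
  have hCm : MeasurableSet ({p : X × X | R p.2 p.1} ∩ {p : X × X | R p.1 p.2}ᶜ) :=
    hM2.inter hM1.compl
  have hfm : Measurable f := by
    have := measurable_measure_prodMk_left (ν := μ) hCm
    convert this using 2
    rfl
  -- ν B = ∫⁻ x in S, f x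
  have hBval : ν B = ∫⁻ x in S, f x ∂μ := by
    rw [hν, Measure.prod_apply hBm]
    have hind : (fun x => μ (Prod.mk x ⁻¹' B)) = S.indicator f := by
      funext x
      by_cases hx : x ∈ S
      · have : Prod.mk x ⁻¹' B = {y | R y x ∧ ¬ R x y} := by
          ext y
          simp only [hB, hSS, Set.mem_preimage, Set.mem_inter_iff, Set.mem_compl_iff,
            Set.mem_setOf_eq, Set.mem_prod]
          constructor
          · tauto
          · intro hy
            exact ⟨⟨hx, hsel x hx y hy⟩, hy⟩
        rw [this, Set.indicator_of_mem hx]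
      · have : Prod.mk x ⁻¹' B = ∅ := by
          ext y
          simp only [hB, hSS, Set.mem_preimage, Set.mem_inter_iff, Set.mem_compl_iff,
            Set.mem_setOf_eq, Set.mem_prod, Set.mem_empty_iff_false]
          tauto
        rw [this, Set.indicator_of_notMem hx, measure_empty]
    rw [hind, lintegral_indicator hS f]
  set L : ℝ≥0∞ := ∫⁻ x in S, f x ∂μ with hL
  have hBfin : ν B < ⊤ :=
    lt_of_le_of_lt (measure_mono (Set.inter_subset_left)) hSSfin
  have hLfin : L < ⊤ := hBval ▸ hBfin
  have hEfin : ν E < ⊤ := by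
    refine lt_of_le_of_lt (measure_mono ?_) hSSfin
    intro p hp
    simp only [hE, Set.mem_setOf_eq] at hp
    exact ⟨hp.1, hp.2.1⟩
  -- key identity in ℝ≥0∞
  have hkey : ν E + 2 * L = μ S * μ S := by
    rw [← hSSval, ← hpart, hswap, hBval]
    ring
  -- pass to reals
  have hkeyR : (ν E).toReal = (μ S).toReal * (μ S).toReal - 2 * L.toReal := by
    have h1 : (ν E + 2 * L).toReal = (μ S).toReal * (μ S).toReal := by
      rw [hkey, ENNReal.toReal_mul]
    rw [ENNReal.toReal_add hEfin.ne (by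
      exact ENNReal.mul_ne_top (by norm_num) hLfin.ne), ENNReal.toReal_mul] at h1
    have : ((2 : ℝ≥0∞)).toReal = 2 := by norm_num
    rw [this] at h1
    linarith
  -- the real-valued integral
  have hfint : Integrable (fun x => (f x).toReal) (μ.restrict S) :=
    integrable_toReal_of_lintegral_ne_top hfm.aemeasurable hLfin.ne
  have hItoReal : ∫ x in S, (f x).toReal ∂μ = L.toReal :=
    integral_toReal hfm.aemeasurable (ae_lt_top hfm hLfin.ne)
  have hrhs : ∫ x in S, ((μ S).toReal - 2 * (f x).toReal) ∂μ
      = (μ S).toReal * (μ S).toReal - 2 * L.toReal := by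
    rw [integral_sub (integrableOn_const (C := (μ S).toReal) hfin.ne) (hfint.const_mul 2),
      setIntegral_const, MeasureTheory.integral_const_mul, hItoReal, smul_eq_mul, measureReal_def]
    try ring
  calc (ν E).toReal = (μ S).toReal * (μ S).toReal - 2 * L.toReal := hkeyR
    _ = ∫ x in S, ((μ S).toReal - 2 * (f x).toReal) ∂μ := hrhs.symm
end

section
/- Suppose T_k is a selection with μ(T_k) < ∞. Then T_k offers maximum choice for m = μ(T_k): for every selection S with μ(S) ≤ μ(T_k), cho(S) ≤ cho(T_k). Moreover, any selection A with μ(A) ≤ μ(T_k) and cho(A) = cho(T_k) satisfies μ(A \ T_k) = 0. -/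
open MeasureTheory
open scoped ENNReal

/-- `k`-Pareto optimality of `x`. -/
noncomputable def po {X : Type*} [MeasurableSpace X] (μ : Measure X)
    (R : X → X → Prop) (x : X) : ℝ≥0∞ :=
  μ {y | R y x ∧ ¬ R x y}

/-- The set `T_k` of at least `k`-Pareto optimal elements. -/
def Tset {X : Type*} [MeasurableSpace X] (μ : Measure X)
    (R : X → X → Prop) (k : ℝ≥0∞) : Set X :=
  {x | po μ R x ≤ k}

/-- The choice offered by a set `A`:
`cho(A) = (μ×μ)({(x,y) ∈ A² : (x R y) = (y R x)})`. -/
noncomputable def cho {X : Type*} [MeasurableSpace X] (μ : Measure X)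
    (R : X → X → Prop) (A : Set X) : ℝ≥0∞ :=
  (μ.prod μ) {p : X × X | p.1 ∈ A ∧ p.2 ∈ A ∧ (R p.1 p.2 ↔ R p.2 p.1)}

/-- A selection: `x ∈ S` and `y R* x` imply `y ∈ S`. -/
def IsSelection {X : Type*} (R : X → X → Prop) (S : Set X) : Prop :=
  ∀ x ∈ S, ∀ y, (R y x ∧ ¬ R x y) → y ∈ S

namespace MaxChoiceAux

variable {X : Type*} [MeasurableSpace X]

/-- The set of elements strictly preferred to `x`. -/
def rstar (R : X → X → Prop) (x : X) : Set X := {y | R y x ∧ ¬ R x y}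

/-- Pairs `(x, y) ∈ A²` with `y R* x`. -/
def spairs (R : X → X → Prop) (A : Set X) : Set (X × X) :=
  {p | p.1 ∈ A ∧ p.2 ∈ A ∧ R p.2 p.1 ∧ ¬ R p.1 p.2}

lemma meas_swapR {R : X → X → Prop} (hR : MeasurableSet {p : X × X | R p.1 p.2}) :
    MeasurableSet {p : X × X | R p.2 p.1} := by
  have h : {p : X × X | R p.2 p.1} = Prod.swap ⁻¹' {p : X × X | R p.1 p.2} := rfl
  rw [h]; exact hR.preimage measurable_swap

lemma meas_spairs {R : X → X → Prop} (hR : MeasurableSet {p : X × X | R p.1 p.2})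
    {A : Set X} (hA : MeasurableSet A) : MeasurableSet (spairs R A) := by
  have h : spairs R A =
      (A ×ˢ A) ∩ ({p : X × X | R p.2 p.1} ∩ {p : X × X | R p.1 p.2}ᶜ) := by
    ext p; simp [spairs, Set.mem_prod]; tauto
  rw [h]
  exact (hA.prod hA).inter ((meas_swapR hR).inter hR.compl)

lemma spairs_eq_lintegral (μ : Measure X) [SigmaFinite μ] {R : X → X → Prop}
    (hR : MeasurableSet {p : X × X | R p.1 p.2}) {A : Set X} (hA : MeasurableSet A) :
    (μ.prod μ) (spairs R A) = ∫⁻ x in A, μ (A ∩ rstar R x) ∂μ := by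
  rw [Measure.prod_apply (meas_spairs hR hA)]
  rw [← lintegral_indicator hA]
  refine lintegral_congr fun x => ?_
  by_cases hx : x ∈ A
  · rw [Set.indicator_of_mem hx]
    congr 1
    ext y
    simp only [Set.mem_preimage, spairs, Set.mem_setOf_eq, Set.mem_inter_iff, rstar]
    tauto
  · rw [Set.indicator_of_notMem hx]
    have h : Prod.mk x ⁻¹' spairs R A = ∅ := by
      ext y; simp [spairs, hx]
    simp [h]

lemma cho_add_spairs (μ : Measure X) [SigmaFinite μ] {R : X → X → Prop}
    (hR : MeasurableSet {p : X × X | R p.1 p.2}) {A : Set X} (hA : MeasurableSet A) :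
    cho μ R A + 2 * (μ.prod μ) (spairs R A) = μ A * μ A := by
  set P : Set (X × X) := {p | p.1 ∈ A ∧ p.2 ∈ A ∧ (R p.1 p.2 ↔ R p.2 p.1)} with hPdef
  set Q1 : Set (X × X) := {p | p.1 ∈ A ∧ p.2 ∈ A ∧ R p.1 p.2 ∧ ¬ R p.2 p.1} with hQ1def
  have hQ1 : MeasurableSet Q1 := by
    have h : Q1 = (A ×ˢ A) ∩ ({p : X × X | R p.1 p.2} ∩ {p : X × X | R p.2 p.1}ᶜ) := by
      ext p; simp [hQ1def, Set.mem_prod]; tauto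
    rw [h]
    exact (hA.prod hA).inter (hR.inter (meas_swapR hR).compl)
  have hQ2 : MeasurableSet (spairs R A) := meas_spairs hR hA
  have hU : A ×ˢ A = P ∪ (Q1 ∪ spairs R A) := by
    ext p; simp [hPdef, hQ1def, spairs, Set.mem_prod]; tauto
  have hd1 : Disjoint Q1 (spairs R A) := by
    rw [Set.disjoint_left]
    rintro p ⟨-, -, h1, h2⟩ ⟨-, -, h3, -⟩
    exact h2 h3
  have hd2 : Disjoint P (Q1 ∪ spairs R A) := by
    rw [Set.disjoint_left]
    rintro p ⟨-, -, h1⟩ hp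
    rcases hp with ⟨-, -, h3, h4⟩ | ⟨-, -, h3, h4⟩
    · exact h4 (h1.mp h3)
    · exact h4 (h1.mpr h3)
  have hswap : (μ.prod μ) Q1 = (μ.prod μ) (spairs R A) := by
    have h : Q1 = Prod.swap ⁻¹' (spairs R A) := by
      ext p; simp [hQ1def, spairs]; tauto
    rw [h]
    exact Measure.measurePreserving_swap.measure_preimage hQ2.nullMeasurableSet
  have hcalc : (μ.prod μ) (A ×ˢ A) =
      cho μ R A + ((μ.prod μ) Q1 + (μ.prod μ) (spairs R A)) := by
    rw [hU, measure_union hd2 (hQ1.union hQ2), measure_union hd1 hQ2]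
    rfl
  rw [Measure.prod_prod] at hcalc
  rw [hcalc, hswap, two_mul]

lemma cho_le_sq (μ : Measure X) [SigmaFinite μ] (R : X → X → Prop) (A : Set X) :
    cho μ R A ≤ μ A * μ A := by
  rw [← Measure.prod_prod (μ := μ) (ν := μ) A A]
  exact measure_mono fun p hp => ⟨hp.1, hp.2.1⟩

lemma two_spairs_le (μ : Measure X) [SigmaFinite μ] {R : X → X → Prop}
    (hR : MeasurableSet {p : X × X | R p.1 p.2}) {A : Set X} (hA : MeasurableSet A) :
    2 * (μ.prod μ) (spairs R A) ≤ μ A * μ A := by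
  rw [← cho_add_spairs μ hR hA]; exact le_add_self

lemma cho_selection (μ : Measure X) [SigmaFinite μ] {R : X → X → Prop}
    (hR : MeasurableSet {p : X × X | R p.1 p.2}) {U : Set X} (hU : MeasurableSet U)
    (hsel : IsSelection R U) :
    cho μ R U + 2 * ∫⁻ x in U, po μ R x ∂μ = μ U * μ U := by
  have h : ∫⁻ x in U, po μ R x ∂μ = (μ.prod μ) (spairs R U) := by
    rw [spairs_eq_lintegral μ hR hU]
    refine setLIntegral_congr_fun hU (fun x hx => ?_)
    have hsub : rstar R x ⊆ U := fun y hy => hsel x hx y hy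
    rw [po, show {y | R y x ∧ ¬ R x y} = rstar R x from rfl,
      Set.inter_eq_right.mpr hsub]
  rw [h, cho_add_spairs μ hR hU]

lemma meas_measure_inter (μ : Measure X) [SigmaFinite μ] {R : X → X → Prop}
    (hR : MeasurableSet {p : X × X | R p.1 p.2}) {C : Set X} (hC : MeasurableSet C) :
    Measurable fun x => μ (C ∩ rstar R x) := by
  have hs : MeasurableSet {p : X × X | p.2 ∈ C ∧ R p.2 p.1 ∧ ¬ R p.1 p.2} := by
    have h : {p : X × X | p.2 ∈ C ∧ R p.2 p.1 ∧ ¬ R p.1 p.2}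
        = ((Set.univ : Set X) ×ˢ C) ∩ ({p : X × X | R p.2 p.1} ∩ {p : X × X | R p.1 p.2}ᶜ) := by
      ext p; simp [Set.mem_prod]
    rw [h]
    exact (MeasurableSet.univ.prod hC).inter ((meas_swapR hR).inter hR.compl)
  have h2 : ∀ x, Prod.mk x ⁻¹' {p : X × X | p.2 ∈ C ∧ R p.2 p.1 ∧ ¬ R p.1 p.2}
      = C ∩ rstar R x := by
    intro x; ext y
    simp only [Set.mem_preimage, Set.mem_setOf_eq, Set.mem_inter_iff, rstar]
  have h3 := measurable_measure_prodMk_left (ν := μ) hs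
  simp only [h2] at h3
  exact h3

lemma lt_setLIntegral_of_lt {μ : Measure X} {f : X → ℝ≥0∞} (hf : Measurable f)
    {B : Set X} (hB : MeasurableSet B) {r : ℝ≥0∞} (hb0 : μ B ≠ 0)
    (hfin : r * μ B ≠ ⊤) (h : ∀ x ∈ B, r < f x) :
    r * μ B < ∫⁻ x in B, f x ∂μ := by
  set Bn : ℕ → Set X := fun n => B ∩ {x | r + ((n : ℝ≥0∞))⁻¹ ≤ f x} with hBndef
  have hcover : B ⊆ ⋃ n, Bn n := by
    intro x hx
    have hr : r < f x := h x hx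
    have h0 : f x - r ≠ 0 := by
      rw [← pos_iff_ne_zero]
      exact tsub_pos_iff_lt.mpr hr
    obtain ⟨n, hn⟩ := ENNReal.exists_inv_nat_lt h0
    refine Set.mem_iUnion.mpr ⟨n, hx, ?_⟩
    calc r + ((n : ℝ≥0∞))⁻¹ ≤ r + (f x - r) := add_le_add le_rfl hn.le
    _ = f x := by rw [add_comm, tsub_add_cancel_of_le hr.le]
  have hex : ∃ n, μ (Bn n) ≠ 0 := by
    by_contra hc
    push_neg at hc
    have hB0 : μ B = 0 := by
      refine le_antisymm ?_ zero_le
      calc μ B ≤ μ (⋃ n, Bn n) := measure_mono hcover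
      _ ≤ ∑' n, μ (Bn n) := measure_iUnion_le _
      _ = 0 := by simp [hc]
    exact hb0 hB0
  obtain ⟨n, hn⟩ := hex
  set s : Set X := {x | r + ((n : ℝ≥0∞))⁻¹ ≤ f x} with hsdef
  have hs : MeasurableSet s := measurableSet_le measurable_const hf
  have hsplit : μ (B ∩ s) + μ (B \ s) = μ B := measure_inter_add_diff B hs
  have hInt : ∫⁻ x in B, f x ∂μ = (∫⁻ x in B ∩ s, f x ∂μ) + ∫⁻ x in B \ s, f x ∂μ := by
    rw [← Set.inter_union_diff B s]
    rw [lintegral_union (hB.diff hs) (Set.disjoint_left.mpr fun x hx1 hx2 => hx2.2 hx1.2)]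
    rw [Set.inter_union_diff]
  have h1 : (r + ((n : ℝ≥0∞))⁻¹) * μ (B ∩ s) ≤ ∫⁻ x in B ∩ s, f x ∂μ := by
    rw [← setLIntegral_const]
    exact setLIntegral_mono hf fun x hx => hx.2
  have h2 : r * μ (B \ s) ≤ ∫⁻ x in B \ s, f x ∂μ := by
    rw [← setLIntegral_const]
    exact setLIntegral_mono hf fun x hx => (h x hx.1).le
  have hne : ((n : ℝ≥0∞))⁻¹ * μ (B ∩ s) ≠ 0 :=
    mul_ne_zero (ENNReal.inv_ne_zero.mpr (ENNReal.natCast_ne_top n)) hn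
  calc r * μ B = r * μ (B ∩ s) + r * μ (B \ s) := by rw [← mul_add, hsplit]
  _ < (r * μ (B ∩ s) + r * μ (B \ s)) + ((n : ℝ≥0∞))⁻¹ * μ (B ∩ s) := by
      refine ENNReal.lt_add_right ?_ hne
      rw [← mul_add, hsplit]; exact hfin
  _ = (r + ((n : ℝ≥0∞))⁻¹) * μ (B ∩ s) + r * μ (B \ s) := by ring
  _ ≤ _ := by rw [hInt]; exact add_le_add h1 h2

end MaxChoiceAux

/-- The maximum choice theorem: if `T_k` is a selection of finite measure, then
every (measurable) selection `S` with `μ(S) ≤ μ(T_k)` satisfies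
`cho(S) ≤ cho(T_k)`; moreover, any selection `A` with `μ(A) ≤ μ(T_k)` and
`cho(A) = cho(T_k)` satisfies `μ(A \ T_k) = 0`. -/
theorem maximum_choice_theorem
    {X : Type*} [MeasurableSpace X] (μ : Measure X) [SigmaFinite μ]
    (R : X → X → Prop) (hR : MeasurableSet {p : X × X | R p.1 p.2})
    (hpo : Measurable (po μ R)) (k : ℝ≥0∞)
    (hTsel : IsSelection R (Tset μ R k)) (hTfin : μ (Tset μ R k) < ⊤) :
    (∀ S : Set X, MeasurableSet S → IsSelection R S → μ S ≤ μ (Tset μ R k) →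
        cho μ R S ≤ cho μ R (Tset μ R k)) ∧
      (∀ A : Set X, MeasurableSet A → IsSelection R A → μ A ≤ μ (Tset μ R k) →
        cho μ R A = cho μ R (Tset μ R k) → μ (A \ Tset μ R k) = 0) := by
  open MaxChoiceAux in
  set T : Set X := Tset μ R k with hTdef
  have hT : MeasurableSet T := hpo measurableSet_Iic
  set k' : ℝ≥0∞ := min k (μ T) with hk'def
  have hμTfin : μ T ≠ ⊤ := hTfin.ne
  have hk'fin : k' ≠ ⊤ := ne_top_of_le_ne_top hμTfin (min_le_right _ _)
  have hpoT : ∀ x ∈ T, po μ R x ≤ k' := by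
    intro x hx
    refine le_min hx ?_
    exact measure_mono fun y hy => hTsel x hx y hy
  have hpoC : ∀ x ∉ T, k' < po μ R x := by
    intro x hx
    exact lt_of_le_of_lt (min_le_left _ _) (lt_of_not_ge hx)
  -- the key estimate
  have key : ∀ S : Set X, MeasurableSet S → IsSelection R S → μ S ≤ μ T →
      cho μ R S ≤ cho μ R T ∧ (μ (S \ T) ≠ 0 → cho μ R S ≠ cho μ R T) := by
    intro S hS hSsel hle
    have hμSfin : μ S ≠ ⊤ := ne_top_of_le_ne_top hμTfin hle
    -- the three pieces
    have hcfin : μ (T ∩ S) ≠ ⊤ :=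
      ne_top_of_le_ne_top hμTfin (measure_mono Set.inter_subset_left)
    have hafin : μ (T \ S) ≠ ⊤ :=
      ne_top_of_le_ne_top hμTfin (measure_mono Set.diff_subset)
    have hbfin : μ (S \ T) ≠ ⊤ :=
      ne_top_of_le_ne_top hμSfin (measure_mono Set.diff_subset)
    have hma : μ T = μ (T ∩ S) + μ (T \ S) := (measure_inter_add_diff T hS).symm
    have hmb : μ S = μ (T ∩ S) + μ (S \ T) := by
      rw [Set.inter_comm]
      exact (measure_inter_add_diff S hT).symm
    -- split the integrals
    have hdTS : Disjoint (T ∩ S) (T \ S) :=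
      Set.disjoint_left.mpr fun x hx1 hx2 => hx2.2 hx1.2
    have hdST : Disjoint (S ∩ T) (S \ T) :=
      Set.disjoint_left.mpr fun x hx1 hx2 => hx2.2 hx1.2
    have hIT : ∫⁻ x in T, po μ R x ∂μ =
        (∫⁻ x in T ∩ S, po μ R x ∂μ) + ∫⁻ x in T \ S, po μ R x ∂μ := by
      conv_lhs => rw [← Set.inter_union_diff T S]
      exact lintegral_union (hT.diff hS) hdTS
    have hIS : ∫⁻ x in S, po μ R x ∂μ =
        (∫⁻ x in T ∩ S, po μ R x ∂μ) + ∫⁻ x in S \ T, po μ R x ∂μ := by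
      conv_lhs => rw [← Set.inter_union_diff S T]
      rw [lintegral_union (hS.diff hT) hdST, Set.inter_comm]
    have eqT : cho μ R T + 2 * ((∫⁻ x in T ∩ S, po μ R x ∂μ) +
        ∫⁻ x in T \ S, po μ R x ∂μ) = μ T * μ T := by
      rw [← hIT]; exact cho_selection μ hR hT hTsel
    have eqS : cho μ R S + 2 * ((∫⁻ x in T ∩ S, po μ R x ∂μ) +
        ∫⁻ x in S \ T, po μ R x ∂μ) = μ S * μ S := by
      rw [← hIS]; exact cho_selection μ hR hS hSsel
    -- finiteness of all quantities
    have hsqT : μ T * μ T ≠ ⊤ := ENNReal.mul_ne_top hμTfin hμTfin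
    have hsqS : μ S * μ S ≠ ⊤ := ENNReal.mul_ne_top hμSfin hμSfin
    have hchoT : cho μ R T ≠ ⊤ := ne_top_of_le_ne_top hsqT (cho_le_sq μ R T)
    have hchoS : cho μ R S ≠ ⊤ := ne_top_of_le_ne_top hsqS (cho_le_sq μ R S)
    have hICA : (∫⁻ x in T ∩ S, po μ R x ∂μ) + ∫⁻ x in T \ S, po μ R x ∂μ ≠ ⊤ := by
      intro hcon
      rw [hcon] at eqT
      simp [ENNReal.mul_top] at eqT
      exact hsqT eqT.symm
    have hICB : (∫⁻ x in T ∩ S, po μ R x ∂μ) + ∫⁻ x in S \ T, po μ R x ∂μ ≠ ⊤ := by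
      intro hcon
      rw [hcon] at eqS
      simp [ENNReal.mul_top] at eqS
      exact hsqS eqS.symm
    have hICfin : ∫⁻ x in T ∩ S, po μ R x ∂μ ≠ ⊤ := by
      intro hcon; exact hICA (by rw [hcon]; simp)
    have hIAfin : ∫⁻ x in T \ S, po μ R x ∂μ ≠ ⊤ := by
      intro hcon; exact hICA (by rw [hcon]; simp)
    have hIBfin : ∫⁻ x in S \ T, po μ R x ∂μ ≠ ⊤ := by
      intro hcon; exact hICB (by rw [hcon]; simp)
    -- the pointwise bounds
    have hIA : ∫⁻ x in T \ S, po μ R x ∂μ ≤ k' * μ (T \ S) := by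
      rw [← setLIntegral_const]
      exact setLIntegral_mono measurable_const fun x hx => hpoT x hx.1
    have hIB : k' * μ (S \ T) ≤ ∫⁻ x in S \ T, po μ R x ∂μ := by
      rw [← setLIntegral_const]
      exact setLIntegral_mono hpo fun x hx => (hpoC x hx.2).le
    have hIBs : μ (S \ T) ≠ 0 → k' * μ (S \ T) < ∫⁻ x in S \ T, po μ R x ∂μ := by
      intro hb0
      exact lt_setLIntegral_of_lt hpo (hS.diff hT) hb0
        (ENNReal.mul_ne_top hk'fin hbfin) fun x hx => hpoC x hx.2
    -- the refined bound on the integral over T \ S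
    have hIA2 : 2 * ∫⁻ x in T \ S, po μ R x ∂μ ≤
        2 * (μ (T ∩ S) * μ (T \ S)) + μ (T \ S) * μ (T \ S) := by
      have hpt : ∀ x ∈ T \ S, po μ R x ≤
          μ ((T ∩ S) ∩ rstar R x) + μ ((T \ S) ∩ rstar R x) := by
        intro x hx
        have hsub : rstar R x ⊆ T := fun y hy => hTsel x hx.1 y hy
        have hsub2 : {y | R y x ∧ ¬ R x y} ⊆ ((T ∩ S) ∩ rstar R x) ∪ ((T \ S) ∩ rstar R x) := by
          intro y hy
          rcases (em (y ∈ S)) with hyS | hyS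
          · exact Or.inl ⟨⟨hsub hy, hyS⟩, hy⟩
          · exact Or.inr ⟨⟨hsub hy, hyS⟩, hy⟩
        calc po μ R x ≤ μ (((T ∩ S) ∩ rstar R x) ∪ ((T \ S) ∩ rstar R x)) :=
              measure_mono hsub2
        _ ≤ _ := measure_union_le _ _
      have hstep1 : ∫⁻ x in T \ S, po μ R x ∂μ ≤
          ∫⁻ x in T \ S, (μ ((T ∩ S) ∩ rstar R x) + μ ((T \ S) ∩ rstar R x)) ∂μ :=
        setLIntegral_mono ((meas_measure_inter μ hR (hT.inter hS)).add
          (meas_measure_inter μ hR (hT.diff hS))) hpt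
      have hstep2 : ∫⁻ x in T \ S, (μ ((T ∩ S) ∩ rstar R x) + μ ((T \ S) ∩ rstar R x)) ∂μ =
          (∫⁻ x in T \ S, μ ((T ∩ S) ∩ rstar R x) ∂μ) +
            ∫⁻ x in T \ S, μ ((T \ S) ∩ rstar R x) ∂μ :=
        lintegral_add_left (meas_measure_inter μ hR (hT.inter hS)) _
      have hstep3 : ∫⁻ x in T \ S, μ ((T ∩ S) ∩ rstar R x) ∂μ ≤ μ (T ∩ S) * μ (T \ S) := by
        rw [← setLIntegral_const]
        exact setLIntegral_mono measurable_const fun x _ =>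
          measure_mono Set.inter_subset_left
      have hstep4 : 2 * ∫⁻ x in T \ S, μ ((T \ S) ∩ rstar R x) ∂μ ≤
          μ (T \ S) * μ (T \ S) := by
        rw [← spairs_eq_lintegral μ hR (hT.diff hS)]
        exact two_spairs_le μ hR (hT.diff hS)
      calc 2 * ∫⁻ x in T \ S, po μ R x ∂μ
          ≤ 2 * ∫⁻ x in T \ S, (μ ((T ∩ S) ∩ rstar R x) + μ ((T \ S) ∩ rstar R x)) ∂μ :=
            mul_le_mul_right hstep1 2
      _ = 2 * ((∫⁻ x in T \ S, μ ((T ∩ S) ∩ rstar R x) ∂μ) +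
            ∫⁻ x in T \ S, μ ((T \ S) ∩ rstar R x) ∂μ) := by rw [hstep2]
      _ = 2 * (∫⁻ x in T \ S, μ ((T ∩ S) ∩ rstar R x) ∂μ) +
            2 * ∫⁻ x in T \ S, μ ((T \ S) ∩ rstar R x) ∂μ := by ring
      _ ≤ 2 * (μ (T ∩ S) * μ (T \ S)) + μ (T \ S) * μ (T \ S) :=
            add_le_add (mul_le_mul_right hstep3 2) hstep4
    -- b ≤ a
    have hba : μ (S \ T) ≤ μ (T \ S) := by
      have h := hle
      rw [hma, hmb] at h
      exact (ENNReal.add_le_add_iff_left hcfin).mp h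
    -- pass to real numbers
    set ra : ℝ := (μ (T \ S)).toReal with hradef
    set rb : ℝ := (μ (S \ T)).toReal with hrbdef
    set rc : ℝ := (μ (T ∩ S)).toReal with hrcdef
    set rIA : ℝ := (∫⁻ x in T \ S, po μ R x ∂μ).toReal with hrIAdef
    set rIB : ℝ := (∫⁻ x in S \ T, po μ R x ∂μ).toReal with hrIBdef
    set rIC : ℝ := (∫⁻ x in T ∩ S, po μ R x ∂μ).toReal with hrICdef
    set rk : ℝ := k'.toReal with hrkdef
    set rcS : ℝ := (cho μ R S).toReal with hrcSdef
    set rcT : ℝ := (cho μ R T).toReal with hrcTdef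
    have hann : (0:ℝ) ≤ ra := ENNReal.toReal_nonneg
    have hbnn : (0:ℝ) ≤ rb := ENNReal.toReal_nonneg
    have hcnn : (0:ℝ) ≤ rc := ENNReal.toReal_nonneg
    have hknn : (0:ℝ) ≤ rk := ENNReal.toReal_nonneg
    have h2Afin : 2 * ((∫⁻ x in T ∩ S, po μ R x ∂μ) + ∫⁻ x in T \ S, po μ R x ∂μ) ≠ ⊤ :=
      ENNReal.mul_ne_top (by norm_num) hICA
    have h2Bfin : 2 * ((∫⁻ x in T ∩ S, po μ R x ∂μ) + ∫⁻ x in S \ T, po μ R x ∂μ) ≠ ⊤ :=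
      ENNReal.mul_ne_top (by norm_num) hICB
    have E1 : rcT + 2 * (rIC + rIA) = (rc + ra) * (rc + ra) := by
      have h := congrArg ENNReal.toReal eqT
      rw [hma] at h
      rw [ENNReal.toReal_add hchoT h2Afin, ENNReal.toReal_mul,
        ENNReal.toReal_add hICfin hIAfin, ENNReal.toReal_mul,
        ENNReal.toReal_add hcfin hafin, ENNReal.toReal_ofNat] at h
      exact h
    have E2 : rcS + 2 * (rIC + rIB) = (rc + rb) * (rc + rb) := by
      have h := congrArg ENNReal.toReal eqS
      rw [hmb] at h
      rw [ENNReal.toReal_add hchoS h2Bfin, ENNReal.toReal_mul,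
        ENNReal.toReal_add hICfin hIBfin, ENNReal.toReal_mul,
        ENNReal.toReal_add hcfin hbfin, ENNReal.toReal_ofNat] at h
      exact h
    have H1 : rIA ≤ rk * ra := by
      have h := ENNReal.toReal_mono (ENNReal.mul_ne_top hk'fin hafin) hIA
      rwa [ENNReal.toReal_mul] at h
    have H2 : rk * rb ≤ rIB := by
      have h := ENNReal.toReal_mono hIBfin hIB
      rwa [ENNReal.toReal_mul] at h
    have H2s : μ (S \ T) ≠ 0 → rk * rb < rIB := by
      intro hb0
      have h := hIBs hb0
      have h' := (ENNReal.toReal_lt_toReal (ENNReal.mul_ne_top hk'fin hbfin) hIBfin).mpr h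
      rwa [ENNReal.toReal_mul] at h'
    have H3 : 2 * rIA ≤ 2 * (rc * ra) + ra * ra := by
      have hfin : 2 * (μ (T ∩ S) * μ (T \ S)) + μ (T \ S) * μ (T \ S) ≠ ⊤ :=
        ENNReal.add_ne_top.mpr ⟨ENNReal.mul_ne_top (by norm_num)
          (ENNReal.mul_ne_top hcfin hafin), ENNReal.mul_ne_top hafin hafin⟩
      have h := ENNReal.toReal_mono hfin hIA2
      rwa [ENNReal.toReal_mul, ENNReal.toReal_ofNat, ENNReal.toReal_add
        (ENNReal.mul_ne_top (by norm_num) (ENNReal.mul_ne_top hcfin hafin))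
        (ENNReal.mul_ne_top hafin hafin), ENNReal.toReal_mul, ENNReal.toReal_ofNat,
        ENNReal.toReal_mul, ENNReal.toReal_mul] at h
    have H4 : rb ≤ ra := ENNReal.toReal_mono hafin hba
    constructor
    · -- cho S ≤ cho T
      rw [← ENNReal.toReal_le_toReal hchoS hchoT]
      by_cases hcase : 2 * rk ≤ ra + rb + 2 * rc
      · nlinarith [mul_nonneg (sub_nonneg.mpr H4) (sub_nonneg.mpr hcase)]
      · push_neg at hcase
        nlinarith [mul_nonneg hbnn (sub_nonneg.mpr hcase.le), mul_nonneg hbnn hann]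
    · -- strictness
      intro hb0 heq
      have heq' : rcS = rcT := by rw [hrcSdef, hrcTdef, heq]
      have hlt : rk * rb < rIB := H2s hb0
      by_cases hcase : 2 * rk ≤ ra + rb + 2 * rc
      · nlinarith [mul_nonneg (sub_nonneg.mpr H4) (sub_nonneg.mpr hcase)]
      · push_neg at hcase
        nlinarith [mul_nonneg hbnn (sub_nonneg.mpr hcase.le), mul_nonneg hbnn hann]
  constructor
  · intro S hS hSsel hle
    exact (key S hS hSsel hle).1
  · intro A hA hAsel hle heq
    by_contra h0
    exact (key A hA hAsel hle).2 h0 heq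
end

section
/- For any selection of at least k-Pareto optimal elements T_k with μ(T_k) < ∞, cho(T_k) = μ(T_k)² − 2 ∫_{[0,k]} x d(po∗μ)(x), where po∗μ is the pushforward of μ under po. -/
open MeasureTheory
open scoped ENNReal

/-- For any selection of at least `k`-Pareto optimal elements `T_k` with
`μ(T_k) < ∞`, `cho(T_k) = μ(T_k)² − 2 ∫_{[0,k]} x d(po∗μ)(x)`, where
`po∗μ` is the pushforward (image) measure of `μ` under `po`. -/
theorem cho_Tk_eq_pushforward_integral
    {X : Type*} [MeasurableSpace X] (μ : Measure X) [SigmaFinite μ]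
    (R : X → X → Prop) (hR : MeasurableSet {p : X × X | R p.1 p.2})
    (hpo : Measurable (po μ R)) (k : ℝ≥0∞)
    (hTsel : ∀ x ∈ Tset μ R k, ∀ y, (R y x ∧ ¬ R x y) → y ∈ Tset μ R k)
    (hTfin : μ (Tset μ R k) < ⊤) :
    (cho μ R (Tset μ R k)).toReal
      = (μ (Tset μ R k)).toReal ^ 2
        - 2 * (∫⁻ x in Set.Icc (0 : ℝ≥0∞) k, x ∂(μ.map (po μ R))).toReal := by
  classical
  set T := Tset μ R k with hT
  have mT : MeasurableSet T := hpo measurableSet_Iic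
  set P := μ.prod μ with hP
  have mR' : MeasurableSet {p : X × X | R p.2 p.1} := by
    have h : {p : X × X | R p.2 p.1} = Prod.swap ⁻¹' {p : X × X | R p.1 p.2} := rfl
    rw [h]; exact measurable_swap hR
  set A : Set (X × X) := {p | p.1 ∈ T ∧ p.2 ∈ T ∧ (R p.1 p.2 ↔ R p.2 p.1)} with hA
  set S : Set (X × X) := {p | p.1 ∈ T ∧ p.2 ∈ T ∧ R p.1 p.2 ∧ ¬ R p.2 p.1} with hS
  set S' : Set (X × X) := {p | p.1 ∈ T ∧ p.2 ∈ T ∧ R p.2 p.1 ∧ ¬ R p.1 p.2} with hS'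
  have mA : MeasurableSet A := by
    have h : A = (T ×ˢ T) ∩ (({p : X × X | R p.1 p.2} ∩ {p : X × X | R p.2 p.1})
        ∪ ({p : X × X | R p.1 p.2}ᶜ ∩ {p : X × X | R p.2 p.1}ᶜ)) := by
      ext p; simp [hA, Set.mem_prod]; tauto
    rw [h]
    exact (mT.prod mT).inter ((hR.inter mR').union (hR.compl.inter mR'.compl))
  have mS : MeasurableSet S := by
    have h : S = (T ×ˢ T) ∩ ({p : X × X | R p.1 p.2} ∩ {p : X × X | R p.2 p.1}ᶜ) := by
      ext p; simp [hS, Set.mem_prod]; tauto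
    rw [h]; exact (mT.prod mT).inter (hR.inter mR'.compl)
  have mS' : MeasurableSet S' := by
    have h : S' = (T ×ˢ T) ∩ ({p : X × X | R p.2 p.1} ∩ {p : X × X | R p.1 p.2}ᶜ) := by
      ext p; simp [hS', Set.mem_prod]; tauto
    rw [h]; exact (mT.prod mT).inter (mR'.inter hR.compl)
  -- swap symmetry
  have hswap : P S = P S' := by
    have h : S' = Prod.swap ⁻¹' S := by
      ext p; simp [hS, hS', Prod.swap]; tauto
    rw [h, ← Measure.map_apply measurable_swap mS, hP, Measure.prod_swap]
  -- partition
  have hunion : T ×ˢ T = A ∪ S ∪ S' := by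
    ext p; simp [hA, hS, hS', Set.mem_prod]; tauto
  have hdisj1 : Disjoint A S := by
    rw [Set.disjoint_left]; intro p hp hp'
    simp [hA, hS] at hp hp'; tauto
  have hdisj2 : Disjoint (A ∪ S) S' := by
    rw [Set.disjoint_left]; intro p hp hp'
    simp [hA, hS, hS'] at hp hp'; tauto
  have hpart : P (T ×ˢ T) = P A + P S + P S' := by
    rw [hunion, measure_union hdisj2 mS', measure_union hdisj1 mS]
  have hTT : P (T ×ˢ T) = μ T * μ T := Measure.prod_prod T T
  -- compute P S' as an integral of po over T
  have hslice : ∀ x, μ (Prod.mk x ⁻¹' S') = T.indicator (fun x => po μ R x) x := by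
    intro x
    by_cases hx : x ∈ T
    · have h : Prod.mk x ⁻¹' S' = {y | R y x ∧ ¬ R x y} := by
        ext y
        simp only [hS', Set.mem_preimage, Set.mem_setOf_eq]
        constructor
        · rintro ⟨_, _, h1, h2⟩; exact ⟨h1, h2⟩
        · rintro ⟨h1, h2⟩; exact ⟨hx, hTsel x hx y ⟨h1, h2⟩, h1, h2⟩
      rw [h, Set.indicator_of_mem hx]; rfl
    · have h : Prod.mk x ⁻¹' S' = ∅ := by
        ext y; simp [hS', hx]
      rw [h, Set.indicator_of_notMem hx]; simp
  have hPS' : P S' = ∫⁻ x in T, po μ R x ∂μ := by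
    rw [hP, Measure.prod_apply mS']
    simp_rw [hslice]
    rw [lintegral_indicator mT]
  -- compute the pushforward set integral
  have hIcc : Set.Icc (0 : ℝ≥0∞) k = Set.Iic k := by
    ext a; simp [zero_le]
  have hpush : (∫⁻ x in Set.Icc (0 : ℝ≥0∞) k, x ∂(μ.map (po μ R)))
      = ∫⁻ x in T, po μ R x ∂μ := by
    rw [hIcc]
    exact setLIntegral_map (f := fun a : ℝ≥0∞ => a) measurableSet_Iic measurable_id hpo
  -- finiteness
  have hfinTT : P (T ×ˢ T) ≠ ⊤ := by
    rw [hTT]; exact ENNReal.mul_ne_top hTfin.ne hTfin.ne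
  have hfinA : P A ≠ ⊤ := by
    intro h; apply hfinTT; rw [hpart, h, top_add, top_add]
  have hfinS : P S ≠ ⊤ := by
    intro h; apply hfinTT; rw [hpart, h]; simp [add_top]
  have hfinS' : P S' ≠ ⊤ := hswap ▸ hfinS
  have hchoA : cho μ R (Tset μ R k) = P A := rfl
  -- final arithmetic
  have key : (μ T).toReal * (μ T).toReal
      = (P A).toReal + (P S').toReal + (P S').toReal := by
    rw [← ENNReal.toReal_mul, ← hTT, hpart, hswap,
      ENNReal.toReal_add (by exact ENNReal.add_ne_top.mpr ⟨hfinA, hfinS'⟩) hfinS',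
      ENNReal.toReal_add hfinA hfinS']
  rw [hchoA, hpush, ← hPS']
  nlinarith [key]
end

section
/- Let X₁ and X₂ be independent continuous (atomless) real random variables on a probability space (Ω, Σ, P), with the relation ω R ω' iff X₁(ω) ≤ X₁(ω') and X₂(ω) ≤ X₂(ω'). Then div(Ω) = 1/2, i.e., the probability that two independently drawn points are incomparable (offer choice) under R is 1/2. -/
open MeasureTheory
open scoped ENNReal

section DivHalfAux

variable {Ω : Type*} [MeasurableSpace Ω] (P : Measure Ω) [IsProbabilityMeasure P]

private lemma div_half_diag_null (Y : Ω → ℝ) (hY : Measurable Y)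
    (hc : ∀ x : ℝ, P {ω | Y ω = x} = 0) :
    (P.prod P) {p : Ω × Ω | Y p.1 = Y p.2} = 0 := by
  have hm : MeasurableSet {p : Ω × Ω | Y p.1 = Y p.2} :=
    measurableSet_eq_fun (hY.comp measurable_fst) (hY.comp measurable_snd)
  rw [Measure.prod_apply hm]
  have h0 : ∀ ω, P (Prod.mk ω ⁻¹' {p : Ω × Ω | Y p.1 = Y p.2}) = 0 := by
    intro ω
    have : Prod.mk ω ⁻¹' {p : Ω × Ω | Y p.1 = Y p.2} = {ω' | Y ω' = Y ω} := by
      ext ω'; simp [Set.mem_preimage, eq_comm]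
    rw [this]; exact hc (Y ω)
  calc (∫⁻ ω, P (Prod.mk ω ⁻¹' {p : Ω × Ω | Y p.1 = Y p.2}) ∂P)
      = ∫⁻ _, 0 ∂P := lintegral_congr h0
    _ = 0 := lintegral_zero

private lemma div_half_swap_lt (Y : Ω → ℝ) (hY : Measurable Y) :
    (P.prod P) {p : Ω × Ω | Y p.2 < Y p.1} = (P.prod P) {p : Ω × Ω | Y p.1 < Y p.2} := by
  have hm : MeasurableSet {p : Ω × Ω | Y p.1 < Y p.2} :=
    measurableSet_lt (hY.comp measurable_fst) (hY.comp measurable_snd)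
  have : {p : Ω × Ω | Y p.2 < Y p.1} = Prod.swap ⁻¹' {p : Ω × Ω | Y p.1 < Y p.2} := rfl
  rw [this, ← Measure.map_apply measurable_swap hm, Measure.prod_swap]

private lemma div_half_lt_half (Y : Ω → ℝ) (hY : Measurable Y)
    (hc : ∀ x : ℝ, P {ω | Y ω = x} = 0) :
    (P.prod P) {p : Ω × Ω | Y p.1 < Y p.2} = 1 / 2 := by
  set A := {p : Ω × Ω | Y p.1 < Y p.2} with hA
  set A' := {p : Ω × Ω | Y p.2 < Y p.1} with hA'
  have hmA : MeasurableSet A :=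
    measurableSet_lt (hY.comp measurable_fst) (hY.comp measurable_snd)
  have hmA' : MeasurableSet A' :=
    measurableSet_lt (hY.comp measurable_snd) (hY.comp measurable_fst)
  have hswap : (P.prod P) A' = (P.prod P) A := div_half_swap_lt P Y hY
  have hdisj : Disjoint A A' := by
    rw [Set.disjoint_left]
    intro p hp hp'
    simp only [hA, hA', Set.mem_setOf_eq] at hp hp'
    exact absurd hp' (not_lt.2 hp.le)
  have hunion : (P.prod P) (A ∪ A') = (P.prod P) A + (P.prod P) A' :=
    measure_union hdisj hmA'
  have hcompl : A ∪ A' = {p : Ω × Ω | Y p.1 = Y p.2}ᶜ := by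
    ext p
    simp only [Set.mem_union, Set.mem_compl_iff, Set.mem_setOf_eq, hA, hA']
    constructor
    · rintro (h | h) <;> intro he <;> simp [he] at h
    · intro h; exact lt_or_gt_of_ne h
  have hmD : MeasurableSet {p : Ω × Ω | Y p.1 = Y p.2} :=
    measurableSet_eq_fun (hY.comp measurable_fst) (hY.comp measurable_snd)
  have hone : (P.prod P) (A ∪ A') = 1 := by
    rw [hcompl, measure_compl hmD (measure_ne_top _ _), div_half_diag_null P Y hY hc]
    simp
  have h2 : (P.prod P) A + (P.prod P) A' = 1 := by rw [← hunion]; exact hone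
  rw [hswap] at h2
  rw [ENNReal.eq_div_iff two_ne_zero ENNReal.ofNat_ne_top, two_mul, h2]

end DivHalfAux

private lemma div_half_cases (a b c d : ℝ) (h1 : a ≠ b) (h2 : c ≠ d) :
    (((a ≤ b ∧ c ≤ d) ↔ (b ≤ a ∧ d ≤ c)) ↔ ((a < b ∧ d < c) ∨ (b < a ∧ c < d))) := by
  rcases h1.lt_or_gt with h | h <;> rcases h2.lt_or_gt with h' | h' <;>
    simp [h, h', h.le, h'.le, h.not_ge, h'.not_ge, h.not_gt, h'.not_gt]

/-- For independent continuous (atomless) real random variables `X₁, X₂` on a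
probability space and the relation `ω R ω' ↔ X₁ ω ≤ X₁ ω' ∧ X₂ ω ≤ X₂ ω'`,
`div(Ω) = 1/2`: the probability that two independently drawn points are
incomparable (offer choice) under `R` is `1/2`. -/
theorem diversity_univ_eq_half
    {Ω : Type*} [MeasurableSpace Ω] (P : Measure Ω) [IsProbabilityMeasure P]
    (X₁ X₂ : Ω → ℝ) (h₁ : Measurable X₁) (h₂ : Measurable X₂)
    (hind : ProbabilityTheory.IndepFun X₁ X₂ P)
    (hc₁ : ∀ x : ℝ, P {ω | X₁ ω = x} = 0)
    (hc₂ : ∀ x : ℝ, P {ω | X₂ ω = x} = 0) :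
    (P.prod P) {p : Ω × Ω |
        ((X₁ p.1 ≤ X₁ p.2 ∧ X₂ p.1 ≤ X₂ p.2) ↔
          (X₁ p.2 ≤ X₁ p.1 ∧ X₂ p.2 ≤ X₂ p.1))}
      = 1 / 2 := by
  set Q := P.prod P with hQ
  -- the two "incomparable" pieces
  set U₁ : Set (Ω × Ω) := {p | X₁ p.1 < X₁ p.2 ∧ X₂ p.2 < X₂ p.1} with hU₁
  set U₂ : Set (Ω × Ω) := {p | X₁ p.2 < X₁ p.1 ∧ X₂ p.1 < X₂ p.2} with hU₂
  have hm1f : Measurable fun p : Ω × Ω => X₁ p.1 := h₁.comp measurable_fst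
  have hm1s : Measurable fun p : Ω × Ω => X₁ p.2 := h₁.comp measurable_snd
  have hm2f : Measurable fun p : Ω × Ω => X₂ p.1 := h₂.comp measurable_fst
  have hm2s : Measurable fun p : Ω × Ω => X₂ p.2 := h₂.comp measurable_snd
  have hmU₁ : MeasurableSet U₁ :=
    (measurableSet_lt hm1f hm1s).inter (measurableSet_lt hm2s hm2f)
  have hmU₂ : MeasurableSet U₂ :=
    (measurableSet_lt hm1s hm1f).inter (measurableSet_lt hm2f hm2s)
  -- marginal half-probabilities
  have hhalf₁ : Q {p : Ω × Ω | X₁ p.1 < X₁ p.2} = 1 / 2 := div_half_lt_half P X₁ h₁ hc₁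
  have hhalf₂ : Q {p : Ω × Ω | X₂ p.1 < X₂ p.2} = 1 / 2 := div_half_lt_half P X₂ h₂ hc₂
  have hhalf₂' : Q {p : Ω × Ω | X₂ p.2 < X₂ p.1} = 1 / 2 :=
    (div_half_swap_lt P X₂ h₂).trans hhalf₂
  -- the key independence computation: Q U₁ = 1/2 * 1/2
  set f : ℝ → ℝ≥0∞ := fun a => P {ω | a < X₁ ω} with hf
  set g : ℝ → ℝ≥0∞ := fun b => P {ω | X₂ ω < b} with hg
  have hfm : Measurable f :=
    Antitone.measurable fun a b hab =>
      measure_mono fun ω h => lt_of_le_of_lt hab h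
  have hgm : Measurable g :=
    Monotone.measurable fun a b hab =>
      measure_mono fun ω h => lt_of_lt_of_le h hab
  have hpre₁ : ∀ ω, Prod.mk ω ⁻¹' U₁ = X₁ ⁻¹' Set.Ioi (X₁ ω) ∩ X₂ ⁻¹' Set.Iio (X₂ ω) := by
    intro ω; ext ω'; simp [hU₁, Set.mem_preimage]
  have hinner : ∀ ω, P (Prod.mk ω ⁻¹' U₁) = f (X₁ ω) * g (X₂ ω) := by
    intro ω
    rw [hpre₁ ω,
      hind.measure_inter_preimage_eq_mul _ _ measurableSet_Ioi measurableSet_Iio]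
    rfl
  have hQU₁ : Q U₁ = ∫⁻ ω, f (X₁ ω) * g (X₂ ω) ∂P := by
    rw [hQ, Measure.prod_apply hmU₁]
    exact lintegral_congr hinner
  have hindfg : ProbabilityTheory.IndepFun (f ∘ X₁) (g ∘ X₂) P := hind.comp hfm hgm
  have hmul :
      (∫⁻ ω, f (X₁ ω) * g (X₂ ω) ∂P)
        = (∫⁻ ω, f (X₁ ω) ∂P) * ∫⁻ ω, g (X₂ ω) ∂P := by
    have := ProbabilityTheory.lintegral_mul_eq_lintegral_mul_lintegral_of_indepFun
      (μ := P) (f := f ∘ X₁) (g := g ∘ X₂) (hfm.comp h₁) (hgm.comp h₂) hindfg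
    simpa [Function.comp] using this
  have hintf : (∫⁻ ω, f (X₁ ω) ∂P) = 1 / 2 := by
    have hmA : MeasurableSet {p : Ω × Ω | X₁ p.1 < X₁ p.2} := measurableSet_lt hm1f hm1s
    have : Q {p : Ω × Ω | X₁ p.1 < X₁ p.2} = ∫⁻ ω, f (X₁ ω) ∂P := by
      rw [hQ, Measure.prod_apply hmA]
      refine lintegral_congr fun ω => ?_
      congr 1
    rw [← this, hhalf₁]
  have hintg : (∫⁻ ω, g (X₂ ω) ∂P) = 1 / 2 := by
    have hmB : MeasurableSet {p : Ω × Ω | X₂ p.2 < X₂ p.1} := measurableSet_lt hm2s hm2f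
    have : Q {p : Ω × Ω | X₂ p.2 < X₂ p.1} = ∫⁻ ω, g (X₂ ω) ∂P := by
      rw [hQ, Measure.prod_apply hmB]
      refine lintegral_congr fun ω => ?_
      congr 1
    rw [← this, hhalf₂']
  have hQU₁val : Q U₁ = 1 / 2 * (1 / 2) := by
    rw [hQU₁, hmul, hintf, hintg]
  -- Q U₂ = Q U₁ by swapping
  have hQU₂val : Q U₂ = 1 / 2 * (1 / 2) := by
    have hsw : U₂ = Prod.swap ⁻¹' U₁ := rfl
    rw [← hQU₁val, hQ, hsw, ← Measure.map_apply measurable_swap hmU₁, Measure.prod_swap]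
  -- the target set agrees with U₁ ∪ U₂ off a null set of ties
  set D : Set (Ω × Ω) := {p | X₁ p.1 = X₁ p.2} ∪ {p | X₂ p.1 = X₂ p.2} with hD
  have hDnull : Q D = 0 :=
    measure_union_null (div_half_diag_null P X₁ h₁ hc₁) (div_half_diag_null P X₂ h₂ hc₂)
  set E : Set (Ω × Ω) := {p : Ω × Ω |
      ((X₁ p.1 ≤ X₁ p.2 ∧ X₂ p.1 ≤ X₂ p.2) ↔
        (X₁ p.2 ≤ X₁ p.1 ∧ X₂ p.2 ≤ X₂ p.1))} with hE
  have hsub : ∀ p : Ω × Ω, p ∉ D → (p ∈ E ↔ p ∈ U₁ ∪ U₂) := by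
    intro p hp
    simp only [hD, Set.mem_union, Set.mem_setOf_eq, not_or] at hp
    exact div_half_cases (X₁ p.1) (X₁ p.2) (X₂ p.1) (X₂ p.2) hp.1 hp.2
  have hae : E =ᵐ[Q] ((U₁ ∪ U₂ : Set (Ω × Ω)) : Ω × Ω → Prop) := by
    rw [Filter.eventuallyEq_set]
    filter_upwards [measure_eq_zero_iff_ae_notMem.1 hDnull] with p hp
    exact hsub p hp
  have hdisj : Disjoint U₁ U₂ := by
    rw [Set.disjoint_left]
    intro p hp hp'
    exact absurd hp'.1 (not_lt.2 hp.1.le)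
  calc Q E = Q (U₁ ∪ U₂) := measure_congr hae
    _ = Q U₁ + Q U₂ := measure_union hdisj hmU₂
    _ = 1 / 2 := by
        rw [hQU₁val, hQU₂val, ← two_mul, ← mul_assoc]
        norm_num [ENNReal.mul_inv_cancel]
end

section
/- Let X₁, X₂ be independent continuous real random variables with the componentwise relation R. Then for two points x, y drawn independently from the distribution, P(po(x) = po(y)) = 0, where po(x) = P({y : y R* x}); hence sorting by po is almost surely tie-free (a linear extension in the probabilistic sense). -/
open MeasureTheory
open scoped ENNReal

section Aux

variable {Ω : Type*} [MeasurableSpace Ω] (P : Measure Ω)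

/-- If `X` has atomless distribution, then the level sets of its CDF carry no mass. -/
lemma level_null [IsFiniteMeasure P] (X : Ω → ℝ) (hX : Measurable X)
    (hc : ∀ x : ℝ, P {ω | X ω = x} = 0) (d : ℝ≥0∞) :
    P {ω | P {ω' | X ω' ≤ X ω} = d} = 0 := by
  set F : ℝ → ℝ≥0∞ := fun t => P {ω' | X ω' ≤ t} with hF
  set M : Set ℝ := {t | F t = d} with hM
  have cover : {ω | P {ω' | X ω' ≤ X ω} = d} ⊆
      ({ω | IsLeast M (X ω)} ∪ {ω | IsGreatest M (X ω)}) ∪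
      ⋃ (p : ℚ × ℚ), {ω | ((p.1 : ℝ) < X ω ∧ X ω < (p.2 : ℝ)) ∧
        P {ω' | (p.1 : ℝ) < X ω' ∧ X ω' < (p.2 : ℝ)} = 0} := by
    intro ω hω
    have hxM : X ω ∈ M := hω
    by_cases hL : IsLeast M (X ω)
    · exact Or.inl (Or.inl hL)
    by_cases hG : IsGreatest M (X ω)
    · exact Or.inl (Or.inr hG)
    right
    have hs : ∃ s ∈ M, s < X ω := by
      by_contra h
      push_neg at h
      exact hL ⟨hxM, fun s hs => (h s hs).ge.le⟩
    have ht : ∃ t ∈ M, X ω < t := by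
      by_contra h
      push_neg at h
      exact hG ⟨hxM, fun t htm => (h t htm)⟩
    obtain ⟨s, hsM, hsx⟩ := hs
    obtain ⟨t, htM, hxt⟩ := ht
    obtain ⟨a, has, hax⟩ := exists_rat_btwn hsx
    obtain ⟨b, hxb, hbt⟩ := exists_rat_btwn hxt
    refine Set.mem_iUnion.2 ⟨(a, b), ⟨⟨hax, hxb⟩, ?_⟩⟩
    have hsub : {ω' | (a : ℝ) < X ω' ∧ X ω' < (b : ℝ)} ⊆
        {ω' | X ω' ≤ t} \ {ω' | X ω' ≤ s} := by
      intro ω' ⟨hl, hr⟩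
      exact ⟨(hr.trans hbt).le, not_le.2 (has.trans hl)⟩
    refine measure_mono_null hsub ?_
    have hsub2 : {ω' | X ω' ≤ s} ⊆ {ω' | X ω' ≤ t} :=
      fun ω' h => le_trans h (le_trans hsx.le hxt.le)
    have hmeas2 : MeasurableSet {ω' | X ω' ≤ s} := hX measurableSet_Iic
    have hd := measure_diff hsub2 hmeas2.nullMeasurableSet (measure_ne_top P _)
    rw [hd]
    have h1 : F t = d := htM
    have h2 : F s = d := hsM
    show F t - F s = 0
    rw [h1, h2, tsub_self]
  refine measure_mono_null cover ?_
  refine measure_union_null (measure_union_null ?_ ?_) ?_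
  · rcases Set.eq_empty_or_nonempty {ω | IsLeast M (X ω)} with h | ⟨ω₀, hω₀⟩
    · simp [h]
    · refine measure_mono_null (fun ω hω => ?_) (hc (X ω₀))
      exact hω.unique hω₀
  · rcases Set.eq_empty_or_nonempty {ω | IsGreatest M (X ω)} with h | ⟨ω₀, hω₀⟩
    · simp [h]
    · refine measure_mono_null (fun ω hω => ?_) (hc (X ω₀))
      exact hω.unique hω₀
  · refine measure_iUnion_null fun p => ?_
    by_cases hp : P {ω' | (p.1 : ℝ) < X ω' ∧ X ω' < (p.2 : ℝ)} = 0
    · exact measure_mono_null (fun ω hω => hω.1) hp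
    · have : {ω | ((p.1 : ℝ) < X ω ∧ X ω < (p.2 : ℝ)) ∧
          P {ω' | (p.1 : ℝ) < X ω' ∧ X ω' < (p.2 : ℝ)} = 0} = ∅ := by
        ext ω; simp [hp]
      simp [this]

/-- Level sets of the product of the two marginal CDFs carry no mass. -/
lemma prod_level_null [IsProbabilityMeasure P] (X₁ X₂ : Ω → ℝ)
    (h₁ : Measurable X₁) (h₂ : Measurable X₂)
    (hind : ProbabilityTheory.IndepFun X₁ X₂ P)
    (hc₁ : ∀ x : ℝ, P {ω | X₁ ω = x} = 0)
    (hc₂ : ∀ x : ℝ, P {ω | X₂ ω = x} = 0) (c : ℝ≥0∞) :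
    P {ω | P {ω' | X₁ ω' ≤ X₁ ω} * P {ω' | X₂ ω' ≤ X₂ ω} = c} = 0 := by
  set F₁ : ℝ → ℝ≥0∞ := fun t => P {ω' | X₁ ω' ≤ t} with hF₁
  set F₂ : ℝ → ℝ≥0∞ := fun t => P {ω' | X₂ ω' ≤ t} with hF₂
  have mF₁ : Measurable F₁ := by
    refine Monotone.measurable fun s t hst => ?_
    exact measure_mono fun ω' (h : X₁ ω' ≤ s) => h.trans hst
  have mF₂ : Measurable F₂ := by
    refine Monotone.measurable fun s t hst => ?_
    exact measure_mono fun ω' (h : X₂ ω' ≤ s) => h.trans hst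
  by_cases hc : c = 0
  · subst hc
    refine measure_mono_null (fun ω (hω : F₁ (X₁ ω) * F₂ (X₂ ω) = 0) => ?_)
      (measure_union_null (level_null P X₁ h₁ hc₁ 0) (level_null P X₂ h₂ hc₂ 0))
    rcases mul_eq_zero.1 hω with h | h
    · exact Or.inl h
    · exact Or.inr h
  · have hmap : P.map (fun ω => (X₁ ω, X₂ ω)) = (P.map X₁).prod (P.map X₂) :=
      (ProbabilityTheory.indepFun_iff_map_prod_eq_prod_map_map h₁.aemeasurable
        h₂.aemeasurable).1 hind
    have hmeas : MeasurableSet {q : ℝ × ℝ | F₁ q.1 * F₂ q.2 = c} := by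
      have : Measurable fun q : ℝ × ℝ => F₁ q.1 * F₂ q.2 :=
        (mF₁.comp measurable_fst).mul (mF₂.comp measurable_snd)
      exact this (measurableSet_singleton c)
    have hset : {ω | F₁ (X₁ ω) * F₂ (X₂ ω) = c} =
        (fun ω => (X₁ ω, X₂ ω)) ⁻¹' {q : ℝ × ℝ | F₁ q.1 * F₂ q.2 = c} := rfl
    rw [hset, ← Measure.map_apply (h₁.prodMk h₂) hmeas, hmap,
      Measure.prod_apply hmeas]
    have hzero : ∀ a : ℝ, (P.map X₂) (Prod.mk a ⁻¹' {q : ℝ × ℝ | F₁ q.1 * F₂ q.2 = c}) = 0 := by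
      intro a
      by_cases ha : F₁ a = 0
      · have : Prod.mk a ⁻¹' {q : ℝ × ℝ | F₁ q.1 * F₂ q.2 = c} = ∅ := by
          ext b
          simp only [Set.mem_preimage, Set.mem_setOf_eq, Set.mem_empty_iff_false, iff_false]
          rw [ha, zero_mul]
          exact fun h => hc h.symm
        simp [this]
      · have hsets : Prod.mk a ⁻¹' {q : ℝ × ℝ | F₁ q.1 * F₂ q.2 = c} =
            {b : ℝ | F₂ b = c / F₁ a} := by
          ext b
          simp only [Set.mem_preimage, Set.mem_setOf_eq]
          rw [ENNReal.eq_div_iff ha (measure_ne_top P _)]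
        rw [hsets,
          show {b : ℝ | F₂ b = c / F₁ a} = F₂ ⁻¹' {c / F₁ a} from rfl,
          Measure.map_apply h₂ (mF₂ (measurableSet_singleton (c / F₁ a)))]
        exact level_null P X₂ h₂ hc₂ (c / F₁ a)
    rw [lintegral_congr hzero, lintegral_zero]

end Aux

/-- For independent continuous real random variables `X₁, X₂` with the
componentwise relation `ω R ω' ↔ X₁ ω ≤ X₁ ω' ∧ X₂ ω ≤ X₂ ω'` and
`po(ω) = P({ω' : ω' R* ω})`, two independently drawn points almost surely
have distinct `po` values: `P(po(x) = po(y)) = 0`; hence sorting by `po`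
is almost surely tie-free. -/
theorem po_ties_null
    {Ω : Type*} [MeasurableSpace Ω] (P : Measure Ω) [IsProbabilityMeasure P]
    (X₁ X₂ : Ω → ℝ) (h₁ : Measurable X₁) (h₂ : Measurable X₂)
    (hind : ProbabilityTheory.IndepFun X₁ X₂ P)
    (hc₁ : ∀ x : ℝ, P {ω | X₁ ω = x} = 0)
    (hc₂ : ∀ x : ℝ, P {ω | X₂ ω = x} = 0) :
    (P.prod P) {p : Ω × Ω |
        P {ω' | (X₁ ω' ≤ X₁ p.1 ∧ X₂ ω' ≤ X₂ p.1) ∧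
            ¬ (X₁ p.1 ≤ X₁ ω' ∧ X₂ p.1 ≤ X₂ ω')}
          = P {ω' | (X₁ ω' ≤ X₁ p.2 ∧ X₂ ω' ≤ X₂ p.2) ∧
            ¬ (X₁ p.2 ≤ X₁ ω' ∧ X₂ p.2 ≤ X₂ ω')}}
      = 0 := by
  set F₁ : ℝ → ℝ≥0∞ := fun t => P {ω' | X₁ ω' ≤ t} with hF₁
  set F₂ : ℝ → ℝ≥0∞ := fun t => P {ω' | X₂ ω' ≤ t} with hF₂
  have mF₁ : Measurable F₁ := by
    refine Monotone.measurable fun s t hst => ?_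
    exact measure_mono fun ω' (h : X₁ ω' ≤ s) => h.trans hst
  have mF₂ : Measurable F₂ := by
    refine Monotone.measurable fun s t hst => ?_
    exact measure_mono fun ω' (h : X₂ ω' ≤ s) => h.trans hst
  have key : ∀ ω : Ω,
      P {ω' | (X₁ ω' ≤ X₁ ω ∧ X₂ ω' ≤ X₂ ω) ∧ ¬ (X₁ ω ≤ X₁ ω' ∧ X₂ ω ≤ X₂ ω')}
        = F₁ (X₁ ω) * F₂ (X₂ ω) := by
    intro ω
    have hAB : {ω' | (X₁ ω' ≤ X₁ ω ∧ X₂ ω' ≤ X₂ ω) ∧ ¬ (X₁ ω ≤ X₁ ω' ∧ X₂ ω ≤ X₂ ω')}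
        = {ω' | X₁ ω' ≤ X₁ ω ∧ X₂ ω' ≤ X₂ ω} \ {ω' | X₁ ω' = X₁ ω ∧ X₂ ω' = X₂ ω} := by
      ext ω'
      simp only [Set.mem_setOf_eq, Set.mem_diff]
      constructor
      · rintro ⟨hb, hn⟩
        exact ⟨hb, fun he => hn ⟨he.1.ge, he.2.ge⟩⟩
      · rintro ⟨hb, hn⟩
        exact ⟨hb, fun hg => hn ⟨le_antisymm hb.1 hg.1, le_antisymm hb.2 hg.2⟩⟩
    rw [hAB, measure_diff_null (measure_mono_null (fun ω' h => h.1) (hc₁ (X₁ ω)))]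
    have : {ω' | X₁ ω' ≤ X₁ ω ∧ X₂ ω' ≤ X₂ ω}
        = X₁ ⁻¹' Set.Iic (X₁ ω) ∩ X₂ ⁻¹' Set.Iic (X₂ ω) := rfl
    rw [this, hind.measure_inter_preimage_eq_mul _ _ measurableSet_Iic measurableSet_Iic]
    rfl
  have hseteq : {p : Ω × Ω |
      P {ω' | (X₁ ω' ≤ X₁ p.1 ∧ X₂ ω' ≤ X₂ p.1) ∧ ¬ (X₁ p.1 ≤ X₁ ω' ∧ X₂ p.1 ≤ X₂ ω')}
        = P {ω' | (X₁ ω' ≤ X₁ p.2 ∧ X₂ ω' ≤ X₂ p.2) ∧ ¬ (X₁ p.2 ≤ X₁ ω' ∧ X₂ p.2 ≤ X₂ ω')}}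
      = {p : Ω × Ω | F₁ (X₁ p.1) * F₂ (X₂ p.1) = F₁ (X₁ p.2) * F₂ (X₂ p.2)} := by
    ext p
    simp only [Set.mem_setOf_eq, key p.1, key p.2]
  rw [hseteq]
  have hmeas : MeasurableSet {p : Ω × Ω | F₁ (X₁ p.1) * F₂ (X₂ p.1) = F₁ (X₁ p.2) * F₂ (X₂ p.2)} := by
    have hf : Measurable fun p : Ω × Ω => F₁ (X₁ p.1) * F₂ (X₂ p.1) :=
      ((mF₁.comp h₁).comp measurable_fst).mul ((mF₂.comp h₂).comp measurable_fst)
    have hg : Measurable fun p : Ω × Ω => F₁ (X₁ p.2) * F₂ (X₂ p.2) :=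
      ((mF₁.comp h₁).comp measurable_snd).mul ((mF₂.comp h₂).comp measurable_snd)
    have hle := measurableSet_le hf hg
    have hge := measurableSet_le hg hf
    have : {p : Ω × Ω | F₁ (X₁ p.1) * F₂ (X₂ p.1) = F₁ (X₁ p.2) * F₂ (X₂ p.2)}
        = {p | F₁ (X₁ p.1) * F₂ (X₂ p.1) ≤ F₁ (X₁ p.2) * F₂ (X₂ p.2)} ∩
          {p | F₁ (X₁ p.2) * F₂ (X₂ p.2) ≤ F₁ (X₁ p.1) * F₂ (X₂ p.1)} := by
      ext p
      simp only [Set.mem_setOf_eq, Set.mem_inter_iff]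
      exact ⟨fun h => ⟨h.le, h.ge⟩, fun h => le_antisymm h.1 h.2⟩
    rw [this]
    exact hle.inter hge
  rw [Measure.prod_apply hmeas]
  have hzero : ∀ x : Ω,
      P (Prod.mk x ⁻¹' {p : Ω × Ω | F₁ (X₁ p.1) * F₂ (X₂ p.1) = F₁ (X₁ p.2) * F₂ (X₂ p.2)}) = 0 := by
    intro x
    have : Prod.mk x ⁻¹' {p : Ω × Ω | F₁ (X₁ p.1) * F₂ (X₂ p.1) = F₁ (X₁ p.2) * F₂ (X₂ p.2)}
        = {y : Ω | F₁ (X₁ y) * F₂ (X₂ y) = F₁ (X₁ x) * F₂ (X₂ x)} := by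
      ext y
      simp only [Set.mem_preimage, Set.mem_setOf_eq]
      exact eq_comm
    rw [this]
    exact prod_level_null P X₁ X₂ h₁ h₂ hind hc₁ hc₂ (F₁ (X₁ x) * F₂ (X₂ x))
  rw [lintegral_congr hzero, lintegral_zero]
end

section
/- Let X = {x₁,…,x_n} be a finite set of points in ℝ² with distinct coordinates in each component, equipped with the counting measure and the componentwise-≤ relation R. Let #disc be the number of unordered discordant pairs (pairs offering choice) and τ = (#conc − #disc)/(n(n−1)/2) Kendall's τ. Then the choice satisfies cho(X) = 2·#disc + n, and consequently τ = (n² + n − 2·cho(X))/(n² − n). -/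
open scoped Classical

/-- The componentwise-≤ relation on `ℝ²`. -/
def Rsq (p q : ℝ × ℝ) : Prop := p.1 ≤ q.1 ∧ p.2 ≤ q.2

/-- Choice of a finite set `s` (counting measure): the number of ordered pairs
`(x,y) ∈ s²` with `(x R y) = (y R x)`. -/
noncomputable def choCard (s : Finset (ℝ × ℝ)) : ℕ :=
  ((s ×ˢ s).filter (fun p => Rsq p.1 p.2 ↔ Rsq p.2 p.1)).card

/-- Number of ordered discordant pairs (pairs offering choice). -/
noncomputable def discOrd (s : Finset (ℝ × ℝ)) : ℕ :=
  ((s ×ˢ s).filter (fun p => ¬ Rsq p.1 p.2 ∧ ¬ Rsq p.2 p.1)).card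

/-- Number of ordered concordant pairs of distinct points. -/
noncomputable def concOrd (s : Finset (ℝ × ℝ)) : ℕ :=
  ((s ×ˢ s).filter (fun p => p.1 ≠ p.2 ∧ (Rsq p.1 p.2 ∨ Rsq p.2 p.1))).card

lemma rsq_antisymm {p q : ℝ × ℝ} (h1 : Rsq p q) (h2 : Rsq q p) : p = q :=
  Prod.ext (le_antisymm h1.1 h2.1) (le_antisymm h1.2 h2.2)

lemma half_div_half (a d : ℝ) : (a / 2) / (d / 2) = a / d := by
  rcases eq_or_ne d 0 with h | h
  · simp [h]
  · field_simp

lemma cho_eq (s : Finset (ℝ × ℝ)) : choCard s = discOrd s + s.card := by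
  unfold choCard discOrd
  have hc : (s ×ˢ s).filter (fun p => Rsq p.1 p.2 ↔ Rsq p.2 p.1)
      = (s ×ˢ s).filter (fun p => (¬ Rsq p.1 p.2 ∧ ¬ Rsq p.2 p.1) ∨ p.1 = p.2) := by
    apply Finset.filter_congr
    intro p _
    constructor
    · intro h
      by_cases h1 : Rsq p.1 p.2
      · exact Or.inr (rsq_antisymm h1 (h.mp h1))
      · exact Or.inl ⟨h1, fun h2 => h1 (h.mpr h2)⟩
    · rintro (⟨h1, h2⟩ | h)
      · exact ⟨fun h' => absurd h' h1, fun h' => absurd h' h2⟩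
      · rw [h]
  rw [hc, Finset.filter_or, Finset.card_union_of_disjoint, ← Finset.diag_eq_filter, Finset.diag_card]
  rw [Finset.disjoint_filter]
  rintro p _ ⟨h1, _⟩ h
  exact h1 (h ▸ ⟨le_refl _, le_refl _⟩)

lemma conc_add_disc (s : Finset (ℝ × ℝ)) :
    concOrd s + discOrd s = s.card * s.card - s.card := by
  unfold concOrd discOrd
  have hd : (s ×ˢ s).filter (fun p => ¬ Rsq p.1 p.2 ∧ ¬ Rsq p.2 p.1)
      = (s ×ˢ s).filter (fun p => p.1 ≠ p.2 ∧ ¬ (Rsq p.1 p.2 ∨ Rsq p.2 p.1)) := by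
    apply Finset.filter_congr
    intro p _
    constructor
    · rintro ⟨h1, h2⟩
      exact ⟨fun h => h1 (h ▸ ⟨le_refl _, le_refl _⟩), fun h => h.elim h1 h2⟩
    · rintro ⟨_, h2⟩
      exact ⟨fun h => h2 (Or.inl h), fun h => h2 (Or.inr h)⟩
  rw [hd, ← Finset.filter_filter, ← Finset.filter_filter,
    Finset.card_filter_add_card_filter_not,
    (by ext; simp [and_assoc] : (s ×ˢ s).filter (fun p => p.1 ≠ p.2) = s.offDiag), Finset.offDiag_card]

/-- For a finite set of `n` points in `ℝ²` with no ties in either coordinate,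
the choice satisfies `cho(X) = 2·#disc + n` (in ordered-pair counts,
`cho(X) = discOrd + n` where `discOrd = 2·#disc`), and Kendall's
`τ = (#conc − #disc)/(n(n−1)/2)` satisfies
`τ = (n² + n − 2·cho(X))/(n² − n)`. -/
theorem cho_and_kendall_tau (s : Finset (ℝ × ℝ))
    (hdist : ∀ x ∈ s, ∀ y ∈ s, x ≠ y → x.1 ≠ y.1 ∧ x.2 ≠ y.2) :
    choCard s = discOrd s + s.card ∧
      ((concOrd s : ℝ) / 2 - (discOrd s : ℝ) / 2)
          / ((s.card : ℝ) * ((s.card : ℝ) - 1) / 2)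
        = ((s.card : ℝ) ^ 2 + (s.card : ℝ) - 2 * (choCard s : ℝ))
          / ((s.card : ℝ) ^ 2 - (s.card : ℝ)) := by
  refine ⟨cho_eq s, ?_⟩
  have h1 := conc_add_disc s
  have hle : s.card ≤ s.card * s.card := by
    rcases Nat.eq_zero_or_pos s.card with h | h
    · simp [h]
    · exact Nat.le_mul_of_pos_left _ h
  have hC : (concOrd s : ℝ) = (s.card : ℝ) * s.card - s.card - discOrd s := by
    have h2 : ((concOrd s : ℝ)) + discOrd s = (s.card : ℝ) * s.card - s.card := by
      rw [← Nat.cast_add, h1, Nat.cast_sub hle, Nat.cast_mul]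
    linarith
  have hcho : (choCard s : ℝ) = discOrd s + s.card := by exact_mod_cast cho_eq s
  rw [div_sub_div_same, half_div_half, hC, hcho]
  congr 1 <;> ring
end
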